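/- Let f : [0,1] → ℝ be continuous with f(0), f(1) ∈ ℤ. If ‖B̃_n(f) - f‖_∞ = o(1/n) as n → ∞, then f(x) = p x + q for some integers p, q, and consequently B̃_n(f) = f for all n ≥ 1. -/

import Mathlib

open Finset

noncomputable def W (n k : ℕ) (x : ℝ) : ℝ := (n.choose k : ℝ) * x ^ k * (1 - x) ^ (n - k)

noncomputable def Sb (f : ℝ → ℝ) (n : ℕ) (x : ℝ) : ℝ :=
  ∑ k ∈ Finset.range (n + 1),
    ((⌊f ((k : ℝ) / n) * (n.choose k : ℝ)⌋ : ℝ)) * x ^ k * (1 - x) ^ (n - k)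

lemma bern_eval (n k : ℕ) (x : ℝ) : (bernsteinPolynomial ℝ n k).eval x = W n k x := by
  simp [bernsteinPolynomial, W]

lemma W_nonneg {n k : ℕ} {x : ℝ} (hx : x ∈ Set.Icc (0:ℝ) 1) : 0 ≤ W n k x := by
  obtain ⟨h0, h1⟩ := hx
  have h2 : (0:ℝ) ≤ 1 - x := by linarith
  unfold W; positivity

lemma sum_W (n : ℕ) (x : ℝ) : ∑ k ∈ range (n+1), W n k x = 1 := by
  have := congrArg (Polynomial.eval x) (bernsteinPolynomial.sum ℝ n)
  simpa [Polynomial.eval_finset_sum, bern_eval] using this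

lemma sum_kW (n : ℕ) (x : ℝ) : ∑ k ∈ range (n+1), (k:ℝ) * W n k x = n * x := by
  have := congrArg (Polynomial.eval x) (bernsteinPolynomial.sum_smul ℝ n)
  simpa [Polynomial.eval_finset_sum, bern_eval] using this

lemma sum_kkW (n : ℕ) (x : ℝ) :
    ∑ k ∈ range (n+1), ((k:ℝ) * ((k:ℝ) - 1)) * W n k x = n * ((n:ℝ)-1) * x^2 := by
  have := congrArg (Polynomial.eval x) (bernsteinPolynomial.sum_mul_smul ℝ n)
  simp only [Polynomial.eval_finset_sum, Polynomial.eval_smul, bern_eval, smul_eq_mul,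
    Polynomial.eval_pow, Polynomial.eval_X, nsmul_eq_mul, Polynomial.eval_mul,
    Polynomial.eval_natCast] at this
  have hL : ∑ k ∈ range (n+1), ((k * (k-1) : ℕ) : ℝ) * W n k x
      = ∑ k ∈ range (n+1), ((k:ℝ) * ((k:ℝ) - 1)) * W n k x := by
    apply Finset.sum_congr rfl
    intro k _
    rcases Nat.eq_zero_or_pos k with h | h
    · subst h; simp
    · congr 1
      push_cast [Nat.cast_sub h]
      ring
  rcases Nat.eq_zero_or_pos n with h | h
  · subst h
    simp [W]
  · have hR : ((n * (n-1) : ℕ) : ℝ) = (n:ℝ) * ((n:ℝ)-1) := by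
      push_cast [Nat.cast_sub h]; ring
    rw [← hL, this, hR]

/-- Linear reproduction. -/
lemma lin_repr (a b : ℝ) {n : ℕ} (hn : 1 ≤ n) (x : ℝ) :
    ∑ k ∈ range (n+1), (a * ((k:ℝ)/n) + b) * W n k x = a * x + b := by
  have hn0 : (n:ℝ) ≠ 0 := Nat.cast_ne_zero.mpr (by omega)
  have : ∀ k ∈ range (n+1), (a * ((k:ℝ)/n) + b) * W n k x
      = (a / n) * ((k:ℝ) * W n k x) + b * W n k x := by
    intro k _; field_simp
  rw [Finset.sum_congr rfl this, Finset.sum_add_distrib, ← Finset.mul_sum, ← Finset.mul_sum,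
    sum_kW, sum_W]
  field_simp

/-- Reproduction of x(1-x). -/
lemma phi_repr {n : ℕ} (hn : 1 ≤ n) (x : ℝ) :
    ∑ k ∈ range (n+1), (((k:ℝ)/n) * (1 - (k:ℝ)/n)) * W n k x
      = x*(1-x) - x*(1-x)/n := by
  have hn0 : (n:ℝ) ≠ 0 := Nat.cast_ne_zero.mpr (by omega)
  have : ∀ k ∈ range (n+1), (((k:ℝ)/n) * (1 - (k:ℝ)/n)) * W n k x
      = (((n:ℝ)-1) / (n:ℝ)^2) * ((k:ℝ) * W n k x)
        - (1 / (n:ℝ)^2) * (((k:ℝ) * ((k:ℝ)-1)) * W n k x) := by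
    intro k _; field_simp; ring
  rw [Finset.sum_congr rfl this, Finset.sum_sub_distrib, ← Finset.mul_sum, ← Finset.mul_sum,
    sum_kW, sum_kkW]
  field_simp

lemma sum_le_max {n : ℕ} {x : ℝ} (hx : x ∈ Set.Icc (0:ℝ) 1) (a : ℕ → ℝ) {M : ℝ}
    (hM : ∀ k ∈ range (n+1), a k ≤ M) :
    ∑ k ∈ range (n+1), a k * W n k x ≤ M := by
  calc ∑ k ∈ range (n+1), a k * W n k x
      ≤ ∑ k ∈ range (n+1), M * W n k x := by
        apply Finset.sum_le_sum
        intro k hk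
        exact mul_le_mul_of_nonneg_right (hM k hk) (W_nonneg hx)
    _ = M := by rw [← Finset.mul_sum, sum_W, mul_one]

lemma min_le_sum {n : ℕ} {x : ℝ} (hx : x ∈ Set.Icc (0:ℝ) 1) (a : ℕ → ℝ) {M : ℝ}
    (hM : ∀ k ∈ range (n+1), M ≤ a k) :
    M ≤ ∑ k ∈ range (n+1), a k * W n k x := by
  calc M = ∑ k ∈ range (n+1), M * W n k x := by rw [← Finset.mul_sum, sum_W, mul_one]
    _ ≤ ∑ k ∈ range (n+1), a k * W n k x := by
        apply Finset.sum_le_sum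
        intro k hk
        exact mul_le_mul_of_nonneg_right (hM k hk) (W_nonneg hx)

lemma Sb_le (f : ℝ → ℝ) (n : ℕ) {x : ℝ} (hx : x ∈ Set.Icc (0:ℝ) 1) :
    Sb f n x ≤ ∑ k ∈ range (n+1), f ((k:ℝ)/n) * W n k x := by
  obtain ⟨h0, h1⟩ := hx
  have h2 : (0:ℝ) ≤ 1 - x := by linarith
  apply Finset.sum_le_sum
  intro k _
  have hfl : ((⌊f ((k:ℝ)/n) * (n.choose k : ℝ)⌋ : ℝ)) ≤ f ((k:ℝ)/n) * (n.choose k : ℝ) :=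
    Int.floor_le _
  have : f ((k:ℝ)/n) * W n k x = (f ((k:ℝ)/n) * (n.choose k : ℝ)) * x ^ k * (1-x) ^ (n-k) := by
    unfold W; ring
  rw [this]
  have hxk : (0:ℝ) ≤ x ^ k := by positivity
  have hxk' : (0:ℝ) ≤ (1-x) ^ (n-k) := by positivity
  exact mul_le_mul_of_nonneg_right (mul_le_mul_of_nonneg_right hfl hxk) hxk'

lemma Sb_ge (f : ℝ → ℝ) (n : ℕ) {x : ℝ} (hx : x ∈ Set.Icc (0:ℝ) 1) :
    (∑ k ∈ range (n+1), f ((k:ℝ)/n) * W n k x) - ((n:ℝ)+1) * (max x (1-x))^n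
      ≤ Sb f n x := by
  obtain ⟨h0, h1⟩ := hx
  have h2 : (0:ℝ) ≤ 1 - x := by linarith
  have ht0 : (0:ℝ) ≤ max x (1-x) := le_trans h0 (le_max_left _ _)
  rw [sub_le_iff_le_add]
  have key : ∀ k ∈ range (n+1),
      f ((k:ℝ)/n) * W n k x ≤ ((⌊f ((k:ℝ)/n) * (n.choose k : ℝ)⌋ : ℝ)) * x ^ k * (1-x) ^ (n-k)
        + (max x (1-x))^n := by
    intro k hk
    have hkn : k ≤ n := by simp at hk; omega
    have hfl : f ((k:ℝ)/n) * (n.choose k : ℝ) - ((⌊f ((k:ℝ)/n) * (n.choose k : ℝ)⌋ : ℝ)) ≤ 1 := by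
      have := Int.sub_one_lt_floor (f ((k:ℝ)/n) * (n.choose k : ℝ))
      linarith
    have hwle : x ^ k * (1-x) ^ (n-k) ≤ (max x (1-x))^n := by
      calc x ^ k * (1-x) ^ (n-k)
          ≤ (max x (1-x)) ^ k * (max x (1-x)) ^ (n-k) := by
            apply mul_le_mul
            · exact pow_le_pow_left₀ h0 (le_max_left _ _) k
            · exact pow_le_pow_left₀ h2 (le_max_right _ _) (n-k)
            · positivity
            · positivity
        _ = (max x (1-x))^n := by rw [← pow_add]; congr 1; omega
    have hw0 : (0:ℝ) ≤ x ^ k * (1-x) ^ (n-k) := by positivity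
    have expand : f ((k:ℝ)/n) * W n k x
        = (f ((k:ℝ)/n) * (n.choose k : ℝ)) * (x ^ k * (1-x) ^ (n-k)) := by unfold W; ring
    have expand2 : ((⌊f ((k:ℝ)/n) * (n.choose k : ℝ)⌋ : ℝ)) * x ^ k * (1-x) ^ (n-k)
        = ((⌊f ((k:ℝ)/n) * (n.choose k : ℝ)⌋ : ℝ)) * (x ^ k * (1-x) ^ (n-k)) := by ring
    rw [expand, expand2]
    have : (f ((k:ℝ)/n) * (n.choose k : ℝ)) * (x ^ k * (1-x) ^ (n-k))
        - ((⌊f ((k:ℝ)/n) * (n.choose k : ℝ)⌋ : ℝ)) * (x ^ k * (1-x) ^ (n-k))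
        = (f ((k:ℝ)/n) * (n.choose k : ℝ) - ((⌊f ((k:ℝ)/n) * (n.choose k : ℝ)⌋ : ℝ)))
          * (x ^ k * (1-x) ^ (n-k)) := by ring
    nlinarith [mul_le_mul_of_nonneg_right hfl hw0, hwle]

  calc ∑ k ∈ range (n+1), f ((k:ℝ)/n) * W n k x
      ≤ ∑ k ∈ range (n+1), (((⌊f ((k:ℝ)/n) * (n.choose k : ℝ)⌋ : ℝ)) * x ^ k * (1-x) ^ (n-k)
          + (max x (1-x))^n) := Finset.sum_le_sum key
    _ = Sb f n x + ((n:ℝ)+1) * (max x (1-x))^n := by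
        rw [Finset.sum_add_distrib, Finset.sum_const, Finset.card_range]
        unfold Sb
        push_cast
        ring

theorem floor_bernstein_saturation (f : ℝ → ℝ) (hf : ContinuousOn f (Set.Icc 0 1))
    (h0 : ∃ m : ℤ, f 0 = (m : ℝ)) (h1 : ∃ m : ℤ, f 1 = (m : ℝ))
    (hlittle : ∀ ε > 0, ∃ N : ℕ, ∀ n ≥ N, ∀ x ∈ Set.Icc (0 : ℝ) 1,
      (n : ℝ) * |(∑ k ∈ Finset.range (n + 1),
        ((⌊f ((k : ℝ) / n) * (n.choose k : ℝ)⌋ : ℝ)) * x ^ k * (1 - x) ^ (n - k)) - f x| ≤ ε) :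
    ∃ p q : ℤ, (∀ x ∈ Set.Icc (0 : ℝ) 1, f x = (p : ℝ) * x + q) ∧
      ∀ n : ℕ, 1 ≤ n → ∀ x ∈ Set.Icc (0 : ℝ) 1,
        (∑ k ∈ Finset.range (n + 1),
          ((⌊f ((k : ℝ) / n) * (n.choose k : ℝ)⌋ : ℝ)) * x ^ k * (1 - x) ^ (n - k)) = f x := by
  obtain ⟨q, hq⟩ := h0
  obtain ⟨p1, hp1⟩ := h1
  refine ⟨p1 - q, q, ?_⟩
  set p : ℤ := p1 - q with hpdef
  have hpq : (p:ℝ) + q = p1 := by push_cast [hpdef]; ring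
  have hlittle' : ∀ ε > 0, ∃ N : ℕ, ∀ n ≥ N, ∀ x ∈ Set.Icc (0 : ℝ) 1,
      (n : ℝ) * |Sb f n x - f x| ≤ ε := hlittle
  -- membership of sample points
  have hsamp : ∀ {n k : ℕ}, 1 ≤ n → k ∈ range (n+1) → ((k:ℝ)/n) ∈ Set.Icc (0:ℝ) 1 := by
    intro n k hn hk
    simp only [Finset.mem_range] at hk
    have hn0 : (0:ℝ) < n := by positivity
    constructor
    · positivity
    · rw [div_le_one hn0]
      exact_mod_cast (by omega : k ≤ n)
  -- decomposition of Bernstein sum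
  have decomp : ∀ {n : ℕ}, 1 ≤ n → ∀ x : ℝ,
      ∑ k ∈ range (n+1), f ((k:ℝ)/n) * W n k x
        = (∑ k ∈ range (n+1),
            (f ((k:ℝ)/n) - ((p:ℝ) * ((k:ℝ)/n) + q)) * W n k x) + ((p:ℝ) * x + q) := by
    intro n hn x
    rw [← lin_repr (p:ℝ) (q:ℝ) hn x, ← Finset.sum_add_distrib]
    apply Finset.sum_congr rfl
    intro k _
    ring
  -- the main claim: f is the linear interpolant on [0,1]
  have main : ∀ x ∈ Set.Icc (0:ℝ) 1, f x = (p:ℝ) * x + q := by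
    -- upper bound: f x - (px+q) ≤ ε x(1-x)
    have UB : ∀ ε : ℝ, 0 < ε → ∀ x ∈ Set.Icc (0:ℝ) 1,
        f x - ((p:ℝ) * x + q) ≤ ε * (x * (1-x)) := by
      intro ε hε
      by_contra hcon
      push_neg at hcon
      obtain ⟨x1, hx1, hx1'⟩ := hcon
      set h : ℝ → ℝ := fun x => f x - ((p:ℝ) * x + q) - ε * (x * (1-x)) with hh
      have hcont : ContinuousOn h (Set.Icc 0 1) := by
        apply ContinuousOn.sub
        apply ContinuousOn.sub hf
        · exact (continuous_const.mul continuous_id |>.add continuous_const).continuousOn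
        · exact (continuous_const.mul (continuous_id.mul (continuous_const.sub continuous_id))).continuousOn
      obtain ⟨x0, hx0, hmax⟩ := isCompact_Icc.exists_isMaxOn
        (Set.nonempty_Icc.mpr zero_le_one) hcont
      have hmax' : ∀ y ∈ Set.Icc (0:ℝ) 1, h y ≤ h x0 := fun y hy => hmax hy
      have hpos : 0 < h x0 := by
        have := hmax' x1 hx1
        have h1' : 0 < h x1 := by simp only [hh]; linarith
        linarith
      have hh0 : h 0 = 0 := by simp [hh, hq]
      have hh1 : h 1 = 0 := by simp [hh, hp1, ← hpq]
      have hx0i : 0 < x0 ∧ x0 < 1 := by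
        constructor
        · rcases lt_or_eq_of_le hx0.1 with h' | h'
          · exact h'
          · exfalso; rw [← h'] at hpos; rw [hh0] at hpos; exact lt_irrefl _ hpos
        · rcases lt_or_eq_of_le hx0.2 with h' | h'
          · exact h'
          · exfalso; rw [h'] at hpos; rw [hh1] at hpos; exact lt_irrefl _ hpos
      set φ0 : ℝ := x0 * (1 - x0) with hφ0
      have hφ0pos : 0 < φ0 := by
        apply mul_pos hx0i.1; linarith [hx0i.2]
      obtain ⟨N, hN⟩ := hlittle' (ε * φ0 / 2) (by positivity)
      set n : ℕ := max N 1 with hn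
      have hn1 : 1 ≤ n := le_max_right _ _
      have hnN : N ≤ n := le_max_left _ _
      have hnR : (0:ℝ) < n := by
        have : (1:ℝ) ≤ n := by exact_mod_cast hn1
        linarith
      -- upper estimate for Sb
      have step1 : Sb f n x0 ≤ f x0 - ε * φ0 / n := by
        have e1 : Sb f n x0 ≤ ∑ k ∈ range (n+1), f ((k:ℝ)/n) * W n k x0 := Sb_le f n hx0
        rw [decomp hn1 x0] at e1
        have e2 : ∑ k ∈ range (n+1),
            (f ((k:ℝ)/n) - ((p:ℝ) * ((k:ℝ)/n) + q)) * W n k x0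
            ≤ h x0 + ε * (x0*(1-x0) - x0*(1-x0)/n) := by
          have split : ∀ k ∈ range (n+1),
              (f ((k:ℝ)/n) - ((p:ℝ) * ((k:ℝ)/n) + q)) * W n k x0
              = (h ((k:ℝ)/n)) * W n k x0
                + ε * ((((k:ℝ)/n) * (1 - (k:ℝ)/n)) * W n k x0) := by
            intro k _
            simp only [hh]
            ring
          rw [Finset.sum_congr rfl split, Finset.sum_add_distrib, ← Finset.mul_sum,
            phi_repr hn1 x0]
          have := sum_le_max hx0 (fun k => h ((k:ℝ)/n))
            (M := h x0) (fun k hk => hmax' _ (hsamp hn1 hk))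
          linarith
        have hxx : h x0 = f x0 - ((p:ℝ) * x0 + q) - ε * φ0 := by simp [hh, hφ0]
        calc Sb f n x0 ≤ (h x0 + ε * (x0*(1-x0) - x0*(1-x0)/n)) + ((p:ℝ) * x0 + q) := by
              linarith
          _ = f x0 - ε * φ0 / n := by rw [hxx, hφ0]; ring
      -- lower estimate from hlittle
      have step2 := hN n hnN x0 hx0
      -- contradiction
      have habs : f x0 - Sb f n x0 ≤ |Sb f n x0 - f x0| := by
        rw [abs_sub_comm]; exact le_abs_self _
      have e3 : (n:ℝ) * (f x0 - Sb f n x0) ≤ ε * φ0 / 2 := by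
        calc (n:ℝ) * (f x0 - Sb f n x0) ≤ (n:ℝ) * |Sb f n x0 - f x0| :=
              mul_le_mul_of_nonneg_left habs (le_of_lt hnR)
          _ ≤ ε * φ0 / 2 := step2
      have e4 : ε * φ0 ≤ (n:ℝ) * (f x0 - Sb f n x0) := by
        have : ε * φ0 / n ≤ f x0 - Sb f n x0 := by linarith
        calc ε * φ0 = (n:ℝ) * (ε * φ0 / n) := by field_simp
          _ ≤ (n:ℝ) * (f x0 - Sb f n x0) := mul_le_mul_of_nonneg_left this (le_of_lt hnR)
      have hepos : 0 < ε * φ0 := by positivity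
      linarith
    -- lower bound: -(ε x(1-x)) ≤ f x - (px+q)
    have LB : ∀ ε : ℝ, 0 < ε → ∀ x ∈ Set.Icc (0:ℝ) 1,
        -(ε * (x * (1-x))) ≤ f x - ((p:ℝ) * x + q) := by
      intro ε hε
      by_contra hcon
      push_neg at hcon
      obtain ⟨x1, hx1, hx1'⟩ := hcon
      set h : ℝ → ℝ := fun x => f x - ((p:ℝ) * x + q) + ε * (x * (1-x)) with hh
      have hcont : ContinuousOn h (Set.Icc 0 1) := by
        apply ContinuousOn.add
        apply ContinuousOn.sub hf
        · exact (continuous_const.mul continuous_id |>.add continuous_const).continuousOn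
        · exact (continuous_const.mul (continuous_id.mul (continuous_const.sub continuous_id))).continuousOn
      obtain ⟨x0, hx0, hmin⟩ := isCompact_Icc.exists_isMinOn
        (Set.nonempty_Icc.mpr zero_le_one) hcont
      have hmin' : ∀ y ∈ Set.Icc (0:ℝ) 1, h x0 ≤ h y := fun y hy => hmin hy
      have hneg : h x0 < 0 := by
        have := hmin' x1 hx1
        have h1' : h x1 < 0 := by simp only [hh]; linarith
        linarith
      have hh0 : h 0 = 0 := by simp [hh, hq]
      have hh1 : h 1 = 0 := by simp [hh, hp1, ← hpq]
      have hx0i : 0 < x0 ∧ x0 < 1 := by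
        constructor
        · rcases lt_or_eq_of_le hx0.1 with h' | h'
          · exact h'
          · exfalso; rw [← h'] at hneg; rw [hh0] at hneg; exact lt_irrefl _ hneg
        · rcases lt_or_eq_of_le hx0.2 with h' | h'
          · exact h'
          · exfalso; rw [h'] at hneg; rw [hh1] at hneg; exact lt_irrefl _ hneg
      set φ0 : ℝ := x0 * (1 - x0) with hφ0
      have hφ0pos : 0 < φ0 := by
        apply mul_pos hx0i.1; linarith [hx0i.2]
      set t : ℝ := max x0 (1 - x0) with ht
      have ht0 : 0 ≤ t := le_trans (le_of_lt hx0i.1) (le_max_left _ _)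
      have ht1 : t < 1 := by
        apply max_lt hx0i.2
        linarith [hx0i.1]
      -- tendsto of the error term
      have htend : Filter.Tendsto (fun n : ℕ => (n:ℝ) * (((n:ℝ)+1) * t^n))
          Filter.atTop (nhds 0) := by
        have h2 : Filter.Tendsto (fun n : ℕ => (n:ℝ)^2 * t^n) Filter.atTop (nhds 0) :=
          tendsto_pow_const_mul_const_pow_of_lt_one 2 ht0 ht1
        have h1' : Filter.Tendsto (fun n : ℕ => (n:ℝ)^1 * t^n) Filter.atTop (nhds 0) :=
          tendsto_pow_const_mul_const_pow_of_lt_one 1 ht0 ht1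
        have := h2.add h1'
        rw [add_zero] at this
        convert this using 2 with n
        ring
      have hev : ∀ᶠ n : ℕ in Filter.atTop, (n:ℝ) * (((n:ℝ)+1) * t^n) < ε * φ0 / 4 := by
        have : (0:ℝ) < ε * φ0 / 4 := by positivity
        exact htend.eventually_lt_const this
      obtain ⟨N2, hN2⟩ := Filter.eventually_atTop.mp hev
      obtain ⟨N, hN⟩ := hlittle' (ε * φ0 / 4) (by positivity)
      set n : ℕ := max (max N N2) 1 with hn
      have hn1 : 1 ≤ n := le_max_right _ _
      have hnN : N ≤ n := le_trans (le_max_left _ _) (le_max_left _ _)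
      have hnN2 : N2 ≤ n := le_trans (le_max_right _ _) (le_max_left _ _)
      have hnR : (0:ℝ) < n := by
        have : (1:ℝ) ≤ n := by exact_mod_cast hn1
        linarith
      -- lower estimate for Sb
      have step1 : f x0 + ε * φ0 / n - ((n:ℝ)+1) * t^n ≤ Sb f n x0 := by
        have e1 := Sb_ge f n hx0
        rw [decomp hn1 x0] at e1
        have e2 : h x0 - ε * (x0*(1-x0) - x0*(1-x0)/n)
            ≤ ∑ k ∈ range (n+1),
              (f ((k:ℝ)/n) - ((p:ℝ) * ((k:ℝ)/n) + q)) * W n k x0 := by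
          have split : ∀ k ∈ range (n+1),
              (f ((k:ℝ)/n) - ((p:ℝ) * ((k:ℝ)/n) + q)) * W n k x0
              = (h ((k:ℝ)/n)) * W n k x0
                - ε * ((((k:ℝ)/n) * (1 - (k:ℝ)/n)) * W n k x0) := by
            intro k _
            simp only [hh]
            ring
          rw [Finset.sum_congr rfl split, Finset.sum_sub_distrib, ← Finset.mul_sum,
            phi_repr hn1 x0]
          have := min_le_sum hx0 (fun k => h ((k:ℝ)/n))
            (M := h x0) (fun k hk => hmin' _ (hsamp hn1 hk))
          linarith
        have hxx : h x0 = f x0 - ((p:ℝ) * x0 + q) + ε * φ0 := by simp [hh, hφ0]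
        have : f x0 + ε * φ0 / n
            = (h x0 - ε * (x0*(1-x0) - x0*(1-x0)/n)) + ((p:ℝ) * x0 + q) := by
          rw [hxx, hφ0]; ring
        linarith
      have step2 := hN n hnN x0 hx0
      have step3 := hN2 n hnN2
      have habs : Sb f n x0 - f x0 ≤ |Sb f n x0 - f x0| := le_abs_self _
      have e3 : (n:ℝ) * (Sb f n x0 - f x0) ≤ ε * φ0 / 4 := by
        calc (n:ℝ) * (Sb f n x0 - f x0) ≤ (n:ℝ) * |Sb f n x0 - f x0| :=
              mul_le_mul_of_nonneg_left habs (le_of_lt hnR)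
          _ ≤ ε * φ0 / 4 := step2
      have e4 : ε * φ0 - (n:ℝ) * (((n:ℝ)+1) * t^n) ≤ (n:ℝ) * (Sb f n x0 - f x0) := by
        have h5 : ε * φ0 / n - ((n:ℝ)+1) * t^n ≤ Sb f n x0 - f x0 := by linarith
        have := mul_le_mul_of_nonneg_left h5 (le_of_lt hnR)
        have hid : (n:ℝ) * (ε * φ0 / n - ((n:ℝ)+1) * t^n)
            = ε * φ0 - (n:ℝ) * (((n:ℝ)+1) * t^n) := by
          field_simp
        linarith [hid ▸ this]
      have hepos : 0 < ε * φ0 := by positivity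
      linarith
    -- combine
    intro x hx
    by_contra hne
    have habs : 0 < |f x - ((p:ℝ) * x + q)| := abs_pos.mpr (sub_ne_zero.mpr hne)
    set d := |f x - ((p:ℝ) * x + q)| with hd
    have hφle : x * (1-x) ≤ 1 := by
      obtain ⟨ha, hb⟩ := hx
      nlinarith
    have hub := UB (d/2) (by positivity) x hx
    have hlb := LB (d/2) (by positivity) x hx
    have hphi0 : 0 ≤ x * (1-x) := by
      obtain ⟨ha, hb⟩ := hx
      nlinarith
    have h1' : |f x - ((p:ℝ) * x + q)| ≤ d/2 * (x * (1-x)) := by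
      rw [abs_le]
      constructor <;> linarith
    have : d ≤ d/2 := by
      calc d = |f x - ((p:ℝ) * x + q)| := hd
        _ ≤ d/2 * (x * (1-x)) := h1'
        _ ≤ d/2 * 1 := by
            apply mul_le_mul_of_nonneg_left hφle
            positivity
        _ = d/2 := mul_one _
    linarith
  refine ⟨main, ?_⟩
  -- exact reproduction part
  intro n hn x hx
  have hn0 : (n:ℝ) ≠ 0 := Nat.cast_ne_zero.mpr (by omega)
  have hsamp : ∀ k, k ∈ range (n+1) → ((k:ℝ)/n) ∈ Set.Icc (0:ℝ) 1 := by
    intro k hk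
    simp only [Finset.mem_range] at hk
    have hnp : (0:ℝ) < n := by
      have : (1:ℝ) ≤ n := by exact_mod_cast hn
      linarith
    constructor
    · positivity
    · rw [div_le_one hnp]
      exact_mod_cast (by omega : k ≤ n)
  have hint : ∀ k ∈ range (n+1), ∃ m : ℤ, f ((k:ℝ)/n) * (n.choose k : ℝ) = (m:ℝ) := by
    intro k hk
    rw [main _ (hsamp k hk)]
    rcases Nat.eq_zero_or_pos k with hk0 | hk0
    · subst hk0
      refine ⟨q, ?_⟩
      simp
    · refine ⟨p * ((n-1).choose (k-1)) + q * (n.choose k), ?_⟩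
      have hnat : n * ((n-1).choose (k-1)) = n.choose k * k := by
        have := Nat.add_one_mul_choose_eq (n-1) (k-1)
        have h1 : n - 1 + 1 = n := by omega
        have h2 : k - 1 + 1 = k := by omega
        rw [h1, h2] at this
        exact this
      have hreal : (n:ℝ) * ((n-1).choose (k-1) : ℝ) = (n.choose k : ℝ) * k := by
        exact_mod_cast hnat
      push_cast
      field_simp
      linear_combination (-(p:ℝ)) * hreal
  have term_eq : ∀ k ∈ range (n+1),
      ((⌊f ((k:ℝ)/n) * (n.choose k : ℝ)⌋ : ℝ)) * x ^ k * (1-x) ^ (n-k)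
        = ((p:ℝ) * ((k:ℝ)/n) + q) * W n k x := by
    intro k hk
    obtain ⟨m, hm⟩ := hint k hk
    rw [hm, Int.floor_intCast, ← hm, main _ (hsamp k hk)]
    unfold W; ring
  rw [Finset.sum_congr rfl term_eq, lin_repr _ _ hn x, main _ hx]
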